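/- Let n, t ≥ 1, let d = 2^n, and let S ⊆ Fin n be a set of qubit sites. Let μ_Haar denote the pushforward of the Haar probability measure on the unitary group U(d) under U ↦ U e₀ (e₀ the first standard basis vector), a probability measure on unit vectors ψ ∈ ℂ^d, and let Υ be any probability measure on the unit vectors of ℂ^d. For a unit vector ψ, let ρ_A(ψ) denote the partial trace over the sites outside S of the rank-one projector ψψ*, i.e. the matrix indexed by (S → Fin 2) with entries ρ_A(ψ)(a,a') = Σ_{b : Sᶜ → Fin 2} ψ(a,b) · conj(ψ(a',b)) under the canonical index equivalence (Fin n → Fin 2) ≃ (S → Fin 2) × (Sᶜ → Fin 2). Suppose Υ is an ε-approximate t-design in the sense that the operator norm of ∫ (ψψ*)^{⊗t} dΥ(ψ) − ∫ (ψψ*)^{⊗t} dμ_Haar(ψ) is at most ε. Then ∫ Tr(ρ_A(ψ)^t) dΥ(ψ) ≤ ∫ Tr(ρ_A(ψ)^t) dμ_Haar(ψ) + 2^{nt} ε. -/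

import Mathlib

open MeasureTheory Matrix

/-- The product measurable structure on complex matrices indexed by `ι`. -/
noncomputable instance matrixMeasurableSpace {ι : Type*} : MeasurableSpace (Matrix ι ι ℂ) :=
  (inferInstance : MeasurableSpace (ι → ι → ℂ))

/-- The reduced density matrix `ρ_A(ψ)` of the rank-one projector `ψψ*` on the sites in
`S`, obtained by tracing out the sites outside `S`:
`ρ_A(ψ)(a, a') = Σ_b ψ(a, b) · conj (ψ(a', b))` under the canonical index equivalence
`(Fin n → Fin 2) ≃ (S → Fin 2) × (Sᶜ → Fin 2)`. -/
noncomputable def reducedDensity {n : ℕ} (S : Finset (Fin n)) (ψ : (Fin n → Fin 2) → ℂ) :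
    Matrix ({i : Fin n // i ∈ S} → Fin 2) ({i : Fin n // i ∈ S} → Fin 2) ℂ :=
  Matrix.of fun a a' =>
    ∑ b : {i : Fin n // ¬ i ∈ S} → Fin 2,
      ψ ((Equiv.piEquivPiSubtypeProd (· ∈ S) fun _ => Fin 2).symm (a, b)) *
        (starRingEnd ℂ) (ψ ((Equiv.piEquivPiSubtypeProd (· ∈ S) fun _ => Fin 2).symm (a', b)))

/-- The `t`-th moment matrix `∫ (ψψ*)^{⊗t} dν(ψ)` of a measure `ν` on state vectors,
written entrywise: the `t`-fold Kronecker power `(ψψ*)^{⊗t}` has `(x, y)` entry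
`∏_k ψ(x k) · conj (ψ(y k))`. -/
noncomputable def momentMatrix (n t : ℕ) (ν : Measure ((Fin n → Fin 2) → ℂ)) :
    Matrix (Fin t → Fin n → Fin 2) (Fin t → Fin n → Fin 2) ℂ :=
  Matrix.of fun x y => ∫ ψ, ∏ k, ψ (x k) * (starRingEnd ℂ) (ψ (y k)) ∂ν

section Aux

variable {ι : Type*} [Fintype ι] [DecidableEq ι]

private lemma sum_cons_aux {n : ℕ} {M : Type*} [AddCommMonoid M] (F : (Fin (n + 1) → ι) → M) :
    ∑ a : Fin (n + 1) → ι, F a = ∑ c : ι, ∑ a : Fin n → ι, F (Fin.cons c a) :=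
  ((Fintype.sum_equiv (Fin.consEquiv fun _ => ι)
    (fun p => F (Fin.cons p.1 p.2)) F (fun _ => rfl)).symm).trans
    (Fintype.sum_prod_type _)

private lemma pow_entry (M : Matrix ι ι ℂ) : ∀ (t : ℕ) (i j : ι),
    (M ^ t) i j = ∑ a : Fin (t + 1) → ι,
      if a 0 = i ∧ a (Fin.last t) = j then ∏ k : Fin t, M (a k.castSucc) (a k.succ) else 0 := by
  intro t
  induction t with
  | zero =>
    intro i j
    rw [pow_zero, Matrix.one_apply, sum_cons_aux]
    have h0 : (Fin.last 0 : Fin 1) = 0 := rfl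
    simp only [h0, Fin.cons_zero, Finset.univ_eq_empty, Finset.prod_empty,
      Finset.univ_unique, Finset.sum_const, Finset.card_univ, Fintype.card_fun,
      ite_and, smul_eq_mul]
    simp only [Finset.card_singleton, one_smul]
    rw [Finset.sum_ite_eq' Finset.univ i (fun x => if x = j then (1 : ℂ) else 0)]
    simp
  | succ t IH =>
    intro i j
    rw [pow_succ', Matrix.mul_apply]
    conv_rhs => rw [sum_cons_aux]
    simp_rw [IH]
    have hlast : (Fin.last (t + 1) : Fin (t + 2)) = (Fin.last t).succ := rfl
    simp only [hlast, Fin.cons_zero, Fin.cons_succ, Fin.prod_univ_succ, Fin.castSucc_zero,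
      Fin.succ_zero_eq_one]
    simp only [← Fin.succ_castSucc, Fin.cons_succ, Finset.mul_sum, mul_ite, mul_zero, ite_and]
    rw [Finset.sum_comm]
    conv_rhs => rw [Finset.sum_comm]
    refine Finset.sum_congr rfl fun a _ => ?_
    rw [Finset.sum_ite_eq, Finset.sum_ite_eq']
    simp

private lemma trace_pow_eq (M : Matrix ι ι ℂ) (t : ℕ) :
    (M ^ t).trace = ∑ a : Fin (t + 1) → ι,
      if a (Fin.last t) = a 0 then ∏ k : Fin t, M (a k.castSucc) (a k.succ) else 0 := by
  rw [Matrix.trace]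
  simp only [Matrix.diag, pow_entry M t]
  rw [Finset.sum_comm]
  refine Finset.sum_congr rfl fun a _ => ?_
  simp only [ite_and]
  rw [Finset.sum_ite_eq Finset.univ (a 0)]
  simp

private lemma count_cyc (t : ℕ) :
    (∑ a : Fin (t + 1 + 1) → ι, if a (Fin.last (t + 1)) = a 0 then (1 : ℝ) else 0)
      = (Fintype.card ι : ℝ) ^ (t + 1) := by
  rw [sum_cons_aux]
  have hlast : (Fin.last (t + 1) : Fin (t + 2)) = (Fin.last t).succ := rfl
  simp only [hlast, Fin.cons_succ, Fin.cons_zero]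
  rw [Finset.sum_comm]
  simp [Finset.sum_ite_eq]

private lemma coord_le (v : EuclideanSpace ℂ ι) (x : ι) : ‖v x‖ ≤ ‖v‖ := by
  have h := norm_inner_le_norm (𝕜 := ℂ) (EuclideanSpace.single x 1) v
  simpa [EuclideanSpace.inner_single_left, EuclideanSpace.norm_single] using h

private lemma entry_le_clm_norm (A : Matrix ι ι ℂ) (x y : ι) :
    ‖A x y‖ ≤ ‖Matrix.toEuclideanCLM (𝕜 := ℂ) A‖ := by
  have h := (Matrix.toEuclideanCLM (𝕜 := ℂ) A).le_opNorm (EuclideanSpace.single y 1)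
  rw [EuclideanSpace.norm_single, norm_one, mul_one] at h
  refine le_trans (le_trans ?_ (coord_le _ x)) h
  have hv : (Matrix.toEuclideanCLM (𝕜 := ℂ) A) (EuclideanSpace.single y 1)
      = (WithLp.equiv 2 _).symm (A.mulVec (Pi.single y 1)) :=
    Matrix.toEuclideanCLM_toLp A _
  rw [hv]
  simp [Matrix.mulVec_single]

end Aux

private lemma trace_reduced {n : ℕ} (S : Finset (Fin n)) (ψ : (Fin n → Fin 2) → ℂ) (t : ℕ) :
    ((reducedDensity S ψ) ^ t).trace =
      ∑ a : Fin (t + 1) → ({i : Fin n // i ∈ S} → Fin 2),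
        ∑ b : Fin t → ({i : Fin n // ¬ i ∈ S} → Fin 2),
          if a (Fin.last t) = a 0 then
            ∏ k : Fin t,
              ψ ((Equiv.piEquivPiSubtypeProd (· ∈ S) fun _ => Fin 2).symm (a k.castSucc, b k)) *
                (starRingEnd ℂ)
                  (ψ ((Equiv.piEquivPiSubtypeProd (· ∈ S) fun _ => Fin 2).symm (a k.succ, b k)))
          else 0 := by
  rw [trace_pow_eq]
  refine Finset.sum_congr rfl fun a _ => ?_
  simp only [reducedDensity, Matrix.of_apply]
  rw [Finset.prod_univ_sum]
  simp only [Fintype.piFinset_univ]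
  split_ifs with h
  · rfl
  · exact Finset.sum_const_zero.symm

private lemma measF {n t : ℕ} (x y : Fin t → Fin n → Fin 2) :
    Measurable fun ψ : (Fin n → Fin 2) → ℂ => ∏ k, ψ (x k) * (starRingEnd ℂ) (ψ (y k)) := by
  refine Finset.measurable_prod _ fun k _ => ?_
  exact (measurable_pi_apply (x k)).mul
    (continuous_star.measurable.comp (measurable_pi_apply (y k)))

private lemma normF_le {n t : ℕ} (x y : Fin t → Fin n → Fin 2) (ψ : (Fin n → Fin 2) → ℂ)
    (hψ : ∑ z : Fin n → Fin 2, Complex.normSq (ψ z) = 1) :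
    ‖∏ k, ψ (x k) * (starRingEnd ℂ) (ψ (y k))‖ ≤ 1 := by
  have hb : ∀ z, ‖ψ z‖ ≤ 1 := by
    intro z
    have h1 : Complex.normSq (ψ z) ≤ 1 := by
      rw [← hψ]
      exact Finset.single_le_sum (f := fun w => Complex.normSq (ψ w))
        (fun _ _ => Complex.normSq_nonneg _) (Finset.mem_univ z)
    rw [← Complex.sq_norm] at h1
    nlinarith [norm_nonneg (ψ z)]
  rw [norm_prod]
  refine Finset.prod_le_one (fun k _ => norm_nonneg _) fun k _ => ?_
  rw [norm_mul]
  have h1 := hb (x k); have h2 := hb (y k)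
  calc ‖ψ (x k)‖ * ‖(starRingEnd ℂ) (ψ (y k))‖ = ‖ψ (x k)‖ * ‖ψ (y k)‖ := by
        simp
    _ ≤ 1 := mul_le_one₀ h1 (norm_nonneg _) h2

private lemma intF {n t : ℕ} (ν : Measure ((Fin n → Fin 2) → ℂ)) [IsProbabilityMeasure ν]
    (hunit : ∀ᵐ ψ ∂ν, ∑ z : Fin n → Fin 2, Complex.normSq (ψ z) = 1)
    (x y : Fin t → Fin n → Fin 2) :
    Integrable (fun ψ => ∏ k, ψ (x k) * (starRingEnd ℂ) (ψ (y k))) ν := by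
  refine Integrable.mono' (integrable_const 1) (measF x y).aestronglyMeasurable ?_
  filter_upwards [hunit] with ψ hψ
  exact normF_le x y ψ hψ

private lemma integral_trace {n t : ℕ} (S : Finset (Fin n)) (ν : Measure ((Fin n → Fin 2) → ℂ))
    [IsProbabilityMeasure ν]
    (hunit : ∀ᵐ ψ ∂ν, ∑ z : Fin n → Fin 2, Complex.normSq (ψ z) = 1) :
    ∫ ψ, ((reducedDensity S ψ) ^ t).trace.re ∂ν =
      ∑ a : Fin (t + 1) → ({i : Fin n // i ∈ S} → Fin 2),
        ∑ b : Fin t → ({i : Fin n // ¬ i ∈ S} → Fin 2),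
          if a (Fin.last t) = a 0 then
            (momentMatrix n t ν
              (fun k => (Equiv.piEquivPiSubtypeProd (· ∈ S) fun _ => Fin 2).symm
                (a k.castSucc, b k))
              (fun k => (Equiv.piEquivPiSubtypeProd (· ∈ S) fun _ => Fin 2).symm
                (a k.succ, b k))).re
          else 0 := by
  have h1 : ∀ (a : Fin (t + 1) → ({i : Fin n // i ∈ S} → Fin 2))
      (b : Fin t → ({i : Fin n // ¬ i ∈ S} → Fin 2)),
      Integrable (fun ψ : (Fin n → Fin 2) → ℂ => if a (Fin.last t) = a 0 then
        (∏ k : Fin t,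
          ψ ((Equiv.piEquivPiSubtypeProd (· ∈ S) fun _ => Fin 2).symm (a k.castSucc, b k)) *
            (starRingEnd ℂ)
              (ψ ((Equiv.piEquivPiSubtypeProd (· ∈ S) fun _ => Fin 2).symm (a k.succ, b k)))).re
        else 0) ν := by
    intro a b
    by_cases h : a (Fin.last t) = a 0
    · simp only [h, if_true]
      exact (intF ν hunit _ _).re
    · simp only [h, if_false]
      exact integrable_const 0
  simp_rw [trace_reduced S _ t, Complex.re_sum, apply_ite Complex.re, Complex.zero_re]
  rw [integral_finset_sum _ (fun a _ => integrable_finset_sum _ (fun b _ => h1 a b))]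
  refine Finset.sum_congr rfl fun a _ => ?_
  rw [integral_finset_sum _ (fun b _ => h1 a b)]
  refine Finset.sum_congr rfl fun b _ => ?_
  by_cases h : a (Fin.last t) = a 0
  · simp only [h, if_true]
    have := integral_re (μ := ν) (intF ν hunit
      (fun k => (Equiv.piEquivPiSubtypeProd (· ∈ S) fun _ => Fin 2).symm (a k.castSucc, b k))
      (fun k => (Equiv.piEquivPiSubtypeProd (· ∈ S) fun _ => Fin 2).symm (a k.succ, b k)))
    simpa [momentMatrix] using this
  · simp [h]

private lemma meas_map (n : ℕ) : Measurable (fun U : Matrix.unitaryGroup (Fin n → Fin 2) ℂ =>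
    (U : Matrix (Fin n → Fin 2) (Fin n → Fin 2) ℂ).mulVec
      (Pi.single (fun _ => (0 : Fin 2)) (1 : ℂ))) := by
  refine measurable_pi_lambda _ fun x => ?_
  simp only [Matrix.mulVec, dotProduct]
  refine Finset.measurable_sum _ fun y _ => ?_
  exact (((measurable_pi_apply y).comp ((measurable_pi_apply x).comp
    measurable_subtype_coe))).mul_const _

private lemma unit_norm_map (n : ℕ) (U : Matrix.unitaryGroup (Fin n → Fin 2) ℂ) :
    ∑ z : Fin n → Fin 2, Complex.normSq
      (((U : Matrix (Fin n → Fin 2) (Fin n → Fin 2) ℂ).mulVec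
        (Pi.single (fun _ => (0 : Fin 2)) (1 : ℂ))) z) = 1 := by
  simp only [Matrix.mulVec_single, MulOpposite.op_one, one_smul]
  have h := Matrix.UnitaryGroup.star_mul_self U
  have h2 := congrArg (fun M : Matrix (Fin n → Fin 2) (Fin n → Fin 2) ℂ =>
    M (fun _ => (0 : Fin 2)) (fun _ => (0 : Fin 2))) h
  simp only [Matrix.mul_apply, Matrix.one_apply_eq, Matrix.star_apply] at h2
  have : ((∑ z : Fin n → Fin 2, Complex.normSq
      ((U : Matrix (Fin n → Fin 2) (Fin n → Fin 2) ℂ) z (fun _ => (0 : Fin 2))) : ℝ) : ℂ)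
      = 1 := by
    push_cast
    rw [← h2]
    refine Finset.sum_congr rfl fun z _ => ?_
    rw [Complex.normSq_eq_conj_mul_self]
    rfl
  exact_mod_cast this

theorem approximate_design_partial_trace_bound
    (n t : ℕ) (hn : 1 ≤ n) (ht : 1 ≤ t) (S : Finset (Fin n)) (ε : ℝ)
    (μU : Measure (Matrix.unitaryGroup (Fin n → Fin 2) ℂ))
    [μU.IsHaarMeasure] [IsProbabilityMeasure μU]
    (Υ : Measure ((Fin n → Fin 2) → ℂ)) [IsProbabilityMeasure Υ]
    (hΥunit : ∀ᵐ ψ ∂Υ, ∑ x : Fin n → Fin 2, Complex.normSq (ψ x) = 1)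
    (μHaar : Measure ((Fin n → Fin 2) → ℂ))
    (hμHaar : μHaar = Measure.map
      (fun U : Matrix.unitaryGroup (Fin n → Fin 2) ℂ =>
        (U : Matrix (Fin n → Fin 2) (Fin n → Fin 2) ℂ).mulVec
          (Pi.single (fun _ => (0 : Fin 2)) (1 : ℂ))) μU)
    (hdesign : ‖Matrix.toEuclideanCLM (𝕜 := ℂ)
        (momentMatrix n t Υ - momentMatrix n t μHaar)‖ ≤ ε) :
    ∫ ψ, ((reducedDensity S ψ) ^ t).trace.re ∂Υ ≤
      (∫ ψ, ((reducedDensity S ψ) ^ t).trace.re ∂μHaar) + 2 ^ (n * t) * ε := by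
  classical
  have hmeas := meas_map n
  haveI : IsProbabilityMeasure μHaar := by
    rw [hμHaar]; exact Measure.isProbabilityMeasure_map hmeas.aemeasurable
  have hset : MeasurableSet {ψ : (Fin n → Fin 2) → ℂ |
      ∑ z : Fin n → Fin 2, Complex.normSq (ψ z) = 1} := by
    have hm : Measurable fun ψ : (Fin n → Fin 2) → ℂ => ∑ z, Complex.normSq (ψ z) :=
      Finset.measurable_sum _ fun z _ =>
        Complex.continuous_normSq.measurable.comp (measurable_pi_apply z)
    exact hm (measurableSet_singleton 1)
  have hHaarUnit : ∀ᵐ ψ ∂μHaar, ∑ z : Fin n → Fin 2, Complex.normSq (ψ z) = 1 := by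
    rw [hμHaar, ae_map_iff hmeas.aemeasurable hset]
    exact Filter.Eventually.of_forall (unit_norm_map n)
  rw [integral_trace S Υ hΥunit, integral_trace S μHaar hHaarUnit]
  -- entrywise bound
  have key : ∀ (a : Fin (t + 1) → ({i : Fin n // i ∈ S} → Fin 2))
      (b : Fin t → ({i : Fin n // ¬ i ∈ S} → Fin 2)),
      (momentMatrix n t Υ
        (fun k => (Equiv.piEquivPiSubtypeProd (· ∈ S) fun _ => Fin 2).symm (a k.castSucc, b k))
        (fun k => (Equiv.piEquivPiSubtypeProd (· ∈ S) fun _ => Fin 2).symm (a k.succ, b k))).re ≤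
      (momentMatrix n t μHaar
        (fun k => (Equiv.piEquivPiSubtypeProd (· ∈ S) fun _ => Fin 2).symm (a k.castSucc, b k))
        (fun k => (Equiv.piEquivPiSubtypeProd (· ∈ S) fun _ => Fin 2).symm (a k.succ, b k))).re
        + ε := by
    intro a b
    set x := fun k : Fin t =>
      (Equiv.piEquivPiSubtypeProd (· ∈ S) fun _ => Fin 2).symm (a k.castSucc, b k)
    set y := fun k : Fin t =>
      (Equiv.piEquivPiSubtypeProd (· ∈ S) fun _ => Fin 2).symm (a k.succ, b k)
    have h := (entry_le_clm_norm (momentMatrix n t Υ - momentMatrix n t μHaar) x y).trans hdesign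
    have h2 : ((momentMatrix n t Υ - momentMatrix n t μHaar) x y).re ≤ ε := by
      refine (Complex.re_le_norm _).trans ?_
      exact h
    rw [Matrix.sub_apply, Complex.sub_re] at h2
    linarith
  have hεnn : 0 ≤ ε := le_trans (norm_nonneg _) hdesign
  have hle : (∑ a : Fin (t + 1) → ({i : Fin n // i ∈ S} → Fin 2),
      ∑ b : Fin t → ({i : Fin n // ¬ i ∈ S} → Fin 2),
        if a (Fin.last t) = a 0 then (momentMatrix n t Υ
          (fun k => (Equiv.piEquivPiSubtypeProd (· ∈ S) fun _ => Fin 2).symm (a k.castSucc, b k))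
          (fun k => (Equiv.piEquivPiSubtypeProd (· ∈ S) fun _ => Fin 2).symm (a k.succ, b k))).re
        else 0) ≤
      (∑ a : Fin (t + 1) → ({i : Fin n // i ∈ S} → Fin 2),
      ∑ b : Fin t → ({i : Fin n // ¬ i ∈ S} → Fin 2),
        ((if a (Fin.last t) = a 0 then (momentMatrix n t μHaar
          (fun k => (Equiv.piEquivPiSubtypeProd (· ∈ S) fun _ => Fin 2).symm (a k.castSucc, b k))
          (fun k => (Equiv.piEquivPiSubtypeProd (· ∈ S) fun _ => Fin 2).symm (a k.succ, b k))).re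
        else 0) + (if a (Fin.last t) = a 0 then ε else 0))) := by
    refine Finset.sum_le_sum fun a _ => Finset.sum_le_sum fun b _ => ?_
    by_cases h : a (Fin.last t) = a 0
    · simp only [h, if_true]; exact key a b
    · simp [h]
  refine hle.trans ?_
  simp_rw [Finset.sum_add_distrib]
  gcongr ?_ + ?_
  · exact le_refl _
  -- counting
  have hcount : (∑ a : Fin (t + 1) → ({i : Fin n // i ∈ S} → Fin 2),
      ∑ _b : Fin t → ({i : Fin n // ¬ i ∈ S} → Fin 2),
        if a (Fin.last t) = a 0 then ε else 0) ≤ 2 ^ (n * t) * ε := by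
    obtain ⟨s, rfl⟩ : ∃ s, t = s + 1 := ⟨t - 1, by omega⟩
    have inner : (∑ a : Fin (s + 1 + 1) → ({i : Fin n // i ∈ S} → Fin 2),
        if a (Fin.last (s + 1)) = a 0 then ε else 0)
        = (Fintype.card ({i : Fin n // i ∈ S} → Fin 2) : ℝ) ^ (s + 1) * ε := by
      calc (∑ a : Fin (s + 1 + 1) → ({i : Fin n // i ∈ S} → Fin 2),
            if a (Fin.last (s + 1)) = a 0 then ε else 0)
          = ∑ a : Fin (s + 1 + 1) → ({i : Fin n // i ∈ S} → Fin 2),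
            (if a (Fin.last (s + 1)) = a 0 then (1:ℝ) else 0) * ε :=
            Finset.sum_congr rfl (fun a _ => by split_ifs <;> ring)
        _ = (∑ a : Fin (s + 1 + 1) → ({i : Fin n // i ∈ S} → Fin 2),
            if a (Fin.last (s + 1)) = a 0 then (1:ℝ) else 0) * ε := by
            rw [Finset.sum_mul]
        _ = _ := by rw [count_cyc]
    rw [Finset.sum_comm, Finset.sum_const, Finset.card_univ, inner, nsmul_eq_mul]
    have hcardA : Fintype.card ({i : Fin n // i ∈ S} → Fin 2) = 2 ^ S.card := by
      rw [Fintype.card_fun, Fintype.card_fin]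
      congr 1
      exact Fintype.card_coe S
    have hcardB : Fintype.card (Fin (s + 1) → ({i : Fin n // ¬ i ∈ S} → Fin 2))
        = 2 ^ ((n - S.card) * (s + 1)) := by
      rw [Fintype.card_fun, Fintype.card_fun, Fintype.card_fin, Fintype.card_fin,
        Fintype.card_subtype_compl, Fintype.card_fin, Fintype.card_coe, ← pow_mul]
    rw [hcardA, hcardB]
    have hScard : S.card ≤ n := by
      have := Finset.card_le_univ S
      simpa [Fintype.card_fin] using this
    push_cast
    have harith : ((2:ℝ) ^ ((n - S.card) * (s + 1))) * ((2:ℝ) ^ S.card) ^ (s + 1)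
        = 2 ^ (n * (s + 1)) := by
      rw [← pow_mul, ← pow_add]
      congr 1
      rw [← Nat.add_mul, Nat.sub_add_cancel hScard]
    rw [← mul_assoc, harith]
  exact hcount
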